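/- The right weak order on a finite Coxeter group W is a lattice; in particular it has a unique maximal element w₀, and for every w ∈ W one has ℓ(w) + ℓ(w⁻¹w₀) = ℓ(w₀). -/

import Mathlib

open CoxeterSystem

variable {B W : Type*} [Group W] {M : CoxeterMatrix B}

/-- The absolute (reflection) length: minimal number of reflections whose product is `w`. -/
noncomputable def absLength (cs : CoxeterSystem M W) (w : W) : ℕ :=
  sInf {n | ∃ l : List W, l.length = n ∧ (∀ t ∈ l, cs.IsReflection t) ∧ l.prod = w}

/-- The absolute order: `u ≤_R w` iff `ℓ_R(w) = ℓ_R(u) + ℓ_R(u⁻¹w)`. -/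
def absLe (cs : CoxeterSystem M W) (u w : W) : Prop :=
  absLength cs w = absLength cs u + absLength cs (u⁻¹ * w)

/-- The right weak order: `u ≤ w` iff `w = u v` with lengths adding up. -/
def weakLe (cs : CoxeterSystem M W) (u w : W) : Prop :=
  ∃ v, w = u * v ∧ cs.length w = cs.length u + cs.length v

/-- A Coxeter element: product of all the simple reflections, each exactly once. -/
def IsCoxeterElement (cs : CoxeterSystem M W) (c : W) : Prop :=
  ∃ l : List B, l.Nodup ∧ (∀ i, i ∈ l) ∧ c = cs.wordProd l

section Aux

open Multiplicative

namespace WeakOrderAux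

open scoped Classical

/-- functions from `W` to `ZMod 2`, written multiplicatively. -/
abbrev Fn (W : Type*) := W → Multiplicative (ZMod 2)

/-- conjugation action of `W` on `Fn W`. -/
def phi : W →* MulAut (Fn W) where
  toFun w :=
    { toFun := fun f t => f (w⁻¹ * t * w)
      invFun := fun f t => f (w * t * w⁻¹)
      left_inv := fun f => by funext t; group
      right_inv := fun f => by funext t; group
      map_mul' := fun f g => rfl }
  map_one' := by ext f t; simp
  map_mul' w₁ w₂ := by ext f t; simp [mul_assoc]

noncomputable def delta (t₀ : W) : Fn W :=
  fun t => if t = t₀ then ofAdd 1 else 1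

lemma phi_apply (w : W) (f : Fn W) (t : W) : phi w f t = f (w⁻¹ * t * w) := rfl

lemma phi_delta (w t₀ : W) : phi w (delta t₀) = delta (w * t₀ * w⁻¹) := by
  funext t
  show delta t₀ (w⁻¹ * t * w) = delta (w * t₀ * w⁻¹) t
  simp only [delta]
  congr 1
  simp only [eq_iff_iff]
  constructor <;> intro h
  · rw [← h]; group
  · rw [h]; group

private lemma comm_pow {G : Type*} [Group G] {a c : G} (h : a * c = c⁻¹ * a) :
    ∀ r : ℕ, a * c ^ r = (c ^ r)⁻¹ * a := by
  intro r
  induction r with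
  | zero => simp
  | succ r ih =>
    calc a * c ^ (r + 1) = (a * c) * c ^ r := by rw [pow_succ']; group
    _ = c⁻¹ * (a * c ^ r) := by rw [h]; group
    _ = c⁻¹ * (c ^ r)⁻¹ * a := by rw [ih]; group
    _ = (c ^ (r + 1))⁻¹ * a := by rw [pow_succ]; group

private lemma comm_pow' {G : Type*} [Group G] {a c : G} (h : a * c = c⁻¹ * a) (r : ℕ) :
    c ^ r * a = a * (c ^ r)⁻¹ := by
  calc c ^ r * a = c ^ r * (a * c ^ r) * (c ^ r)⁻¹ := by group
  _ = c ^ r * ((c ^ r)⁻¹ * a) * (c ^ r)⁻¹ := by rw [comm_pow h r]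
  _ = a * (c ^ r)⁻¹ := by group

private lemma conj_pow {G : Type*} [Group G] {a c : G} (h : a * c = c⁻¹ * a) (r : ℕ) :
    c ^ r * a * (c ^ r)⁻¹ = c ^ (2 * r) * a := by
  calc c ^ r * a * (c ^ r)⁻¹ = a * (c ^ r)⁻¹ * (c ^ r)⁻¹ := by rw [comm_pow' h]
  _ = a * (c ^ (2 * r))⁻¹ := by rw [two_mul, pow_add]; group
  _ = c ^ (2 * r) * a := (comm_pow' h (2 * r)).symm

private lemma conj_pow' {G : Type*} [Group G] {a c : G} (h : a * c = c⁻¹ * a) (r : ℕ) :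
    c ^ r * (c * a) * (c ^ r)⁻¹ = c ^ (2 * r + 1) * a := by
  calc c ^ r * (c * a) * (c ^ r)⁻¹ = c ^ (r + 1) * (a * (c ^ r)⁻¹) := by rw [pow_succ]; group
  _ = c ^ (r + 1) * (c ^ r * a) := by rw [comm_pow' h]
  _ = c ^ (2 * r + 1) * a := by rw [← mul_assoc, ← pow_add]; ring_nf

private lemma pow_formula {a c : W} (h : a * c = c⁻¹ * a) (n : ℕ) :
    ((⟨delta a * delta (c * a), c⟩ : Fn W ⋊[phi] W) ^ n)
      = ⟨fun t => ofAdd (∑ k ∈ Finset.range (2 * n), if t = c ^ k * a then (1 : ZMod 2) else 0),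
          c ^ n⟩ := by
  induction n with
  | zero =>
    ext t
    · show _ = ofAdd (∑ k ∈ Finset.range (2 * 0), if t = c ^ k * a then (1 : ZMod 2) else 0)
      rfl
    · simp
  | succ n ih =>
    rw [pow_succ, ih]
    ext t
    · rw [SemidirectProduct.mul_left]
      show _ * (phi (c ^ n) (delta a * delta (c * a))) t = _
      rw [map_mul (phi (c ^ n)), phi_delta, phi_delta, conj_pow h, conj_pow' h]
      show ofAdd _ * (delta (c ^ (2*n) * a) t * delta (c ^ (2*n+1) * a) t) = ofAdd (∑ k ∈ Finset.range (2 * (n + 1)), if t = c ^ k * a then (1 : ZMod 2) else 0)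
      rw [mul_add 2 n 1, mul_one]
      rw [Finset.sum_range_succ, Finset.sum_range_succ]
      have hd : ∀ k : ℕ, delta (c ^ k * a) t = ofAdd (if t = c ^ k * a then (1 : ZMod 2) else 0) := by
        intro k; simp only [delta]; split <;> simp
      rw [hd, hd, ← ofAdd_add, ← ofAdd_add, add_assoc]
    · rw [SemidirectProduct.mul_right]
      show c ^ n * c = c ^ (n + 1)
      rw [pow_succ]



variable (cs : CoxeterSystem M W)

local prefix:100 "s" => cs.simple

noncomputable def gens (i : B) : Fn W ⋊[phi] W := ⟨delta (s i), s i⟩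

lemma liftable : M.IsLiftable (gens cs) := by
  intro i j
  have ha := cs.simple_mul_simple_self i
  have hb := cs.simple_mul_simple_self j
  have hrel : s i * (s i * s j) = (s i * s j)⁻¹ * s i := by
    rw [← mul_assoc, ha, one_mul, mul_inv_rev, cs.inv_simple, cs.inv_simple, mul_assoc, ha,
      mul_one]
  have hfifj : gens cs i * gens cs j
      = (⟨delta (s i) * delta ((s i * s j) * s i), s i * s j⟩ : Fn W ⋊[phi] W) := by
    apply SemidirectProduct.ext
    · rw [SemidirectProduct.mul_left]
      show delta (s i) * phi (s i) (delta (s j)) = _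
      rw [phi_delta, cs.inv_simple, mul_assoc]
    · rfl
  rw [hfifj, pow_formula hrel (M i j)]
  have hcm : (s i * s j) ^ M i j = 1 := cs.simple_mul_simple_pow i j
  apply SemidirectProduct.ext
  swap
  · show (s i * s j) ^ M i j = (1 : Fn W ⋊[phi] W).right
    rw [hcm]; rfl
  funext t
  show ofAdd _ = (1 : Fn W ⋊[phi] W).left t
  have h1 : ((1 : Fn W ⋊[phi] W)).left t = ofAdd 0 := rfl
  rw [h1]
  congr 1
  rw [two_mul, Finset.sum_range_add]
  have heq : ∀ k ∈ Finset.range (M i j),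
      (if t = (s i * s j) ^ (M i j + k) * s i then (1 : ZMod 2) else 0)
        = (if t = (s i * s j) ^ k * s i then (1 : ZMod 2) else 0) := by
    intro k _
    rw [pow_add, hcm, one_mul]
  rw [Finset.sum_congr rfl heq]
  exact CharTwo.add_self_eq_zero _

noncomputable def theta : W →* Fn W ⋊[phi] W := cs.lift ⟨gens cs, liftable cs⟩

@[simp] lemma theta_simple (i : B) : theta cs (s i) = gens cs i :=
  cs.lift_apply_simple (liftable cs) i

lemma theta_right (w : W) : (theta cs w).right = w := by
  have : (SemidirectProduct.rightHom).comp (theta cs) = MonoidHom.id W := by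
    apply cs.ext_simple
    intro i
    simp [gens]
  calc (theta cs w).right = ((SemidirectProduct.rightHom).comp (theta cs)) w := rfl
  _ = w := by rw [this]; rfl

/-- The parity of the number of times the reflection `t` occurs as a left inversion of `w`. -/
noncomputable def nu (w t : W) : ZMod 2 := toAdd ((theta cs w).left t)

lemma nu_one (t : W) : nu cs 1 t = 0 := by
  simp [nu]

lemma nu_mul (u v t : W) : nu cs (u * v) t = nu cs u t + nu cs v (u⁻¹ * t * u) := by
  unfold nu
  rw [map_mul, SemidirectProduct.mul_left, theta_right]
  rfl

lemma nu_simple (i : B) (t : W) : nu cs (s i) t = if t = s i then 1 else 0 := by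
  unfold nu
  rw [theta_simple]
  show toAdd (delta (s i) t) = _
  simp only [delta]
  split <;> simp


local prefix:100 "ℓ" => cs.length

lemma nu_refl_self (t : W) (ht : cs.IsReflection t) : nu cs t t = 1 := by
  obtain ⟨w, i, rfl⟩ := ht
  have harg : w⁻¹ * (w * s i * w⁻¹) * w = s i := by group
  have h0 : nu cs w (w * s i * w⁻¹) + nu cs w⁻¹ (w⁻¹ * (w * s i * w⁻¹) * w) = 0 := by
    rw [← nu_mul, mul_inv_cancel, nu_one]
  rw [harg] at h0
  have e1 : w * s i * w⁻¹ = w * (s i * w⁻¹) := by group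
  have harg2 : (s i)⁻¹ * s i * s i = s i := by
    rw [cs.inv_simple, cs.simple_mul_simple_self, one_mul]
  have key : nu cs (w * s i * w⁻¹) (w * s i * w⁻¹)
      = nu cs w (w * s i * w⁻¹) + (nu cs (s i) (s i) + nu cs w⁻¹ (s i)) := by
    nth_rewrite 1 [e1]
    rw [nu_mul, harg, nu_mul, harg2]
  rw [key, nu_simple]
  simp only [eq_self_iff_true, if_true]
  linear_combination h0

private lemma zmod2_cases (x : ZMod 2) : x = 0 ∨ x = 1 := by revert x; decide

lemma inversion_of_nu : ∀ n, ∀ w t : W, ℓ w ≤ n → cs.IsReflection t → nu cs w t = 1 →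
    ℓ (t * w) < ℓ w := by
  intro n
  induction n with
  | zero =>
    intro w t hw _ hnu
    rw [Nat.le_zero, cs.length_eq_zero_iff] at hw
    rw [hw, nu_one] at hnu
    exact absurd hnu (by decide)
  | succ n ih =>
    intro w t hw ht hnu
    have hw1 : w ≠ 1 := by
      rintro rfl
      rw [nu_one] at hnu
      exact absurd hnu (by decide)
    obtain ⟨i, hdesc⟩ := cs.exists_leftDescent_of_ne_one hw1
    have hdesc' : ℓ (s i * w) < ℓ w := hdesc
    by_cases hti : t = s i
    · rw [hti]; exact hdesc'
    · set w' := s i * w with hw'def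
      have hw' : w = s i * w' := by
        rw [hw'def, ← mul_assoc, cs.simple_mul_simple_self, one_mul]
      have hsplit : nu cs w t = nu cs (s i) t + nu cs w' ((s i)⁻¹ * t * s i) := by
        nth_rewrite 1 [hw']
        rw [nu_mul]
      rw [nu_simple, if_neg hti, zero_add, cs.inv_simple] at hsplit
      have hrefl : cs.IsReflection (s i * t * s i) := by
        have := ht.conj (s i)
        rwa [cs.inv_simple] at this
      have hnu' : nu cs w' (s i * t * s i) = 1 := by rw [← hsplit]; exact hnu
      have hlt' : ℓ ((s i * t * s i) * w') < ℓ w' := by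
        apply ih _ _ _ hrefl hnu'
        omega
      have htw : t * w = s i * ((s i * t * s i) * w') := by
        have h2 : s i * ((s i * t * s i) * w') = (s i * s i) * (t * (s i * w')) := by group
        rw [h2, cs.simple_mul_simple_self, one_mul, ← hw']
      calc ℓ (t * w) = ℓ (s i * ((s i * t * s i) * w')) := by rw [htw]
      _ ≤ ℓ (s i) + ℓ ((s i * t * s i) * w') := cs.length_mul_le _ _
      _ < ℓ w := by rw [cs.length_simple]; omega

lemma nu_eq_one_iff {w t : W} (ht : cs.IsReflection t) :
    nu cs w t = 1 ↔ ℓ (t * w) < ℓ w := by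
  constructor
  · exact inversion_of_nu cs (ℓ w) w t le_rfl ht
  · intro hlt
    have harg : t⁻¹ * t * t = t := by group
    have hw : w = t * (t * w) := by rw [← mul_assoc, ht.mul_self, one_mul]
    have key : nu cs w t = nu cs t t + nu cs (t * w) t := by
      nth_rewrite 1 [hw]
      rw [nu_mul, harg]
    have h0 : nu cs (t * w) t = 0 := by
      rcases zmod2_cases (nu cs (t * w) t) with h | h
      · exact h
      · exfalso
        have := inversion_of_nu cs (ℓ (t * w)) (t * w) t le_rfl ht h
        rw [← mul_assoc, ht.mul_self, one_mul] at this
        omega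
    rw [key, h0, nu_refl_self cs t ht, add_zero]

lemma nu_eq_one_iff' {w t : W} (ht : cs.IsReflection t) :
    nu cs w t = 1 ↔ cs.IsLeftInversion w t := by
  rw [nu_eq_one_iff cs ht]
  exact ⟨fun h => ⟨ht, h⟩, fun h => h.2⟩

end WeakOrderAux

namespace WeakOrderAux

variable {B W : Type*} [Group W] {M : CoxeterMatrix B} (cs : CoxeterSystem M W)

local prefix:100 "s" => cs.simple
local prefix:100 "ℓ" => cs.length

lemma one_le (w : W) : weakLe cs 1 w := ⟨w, (one_mul w).symm, by simp⟩

lemma le_refl (w : W) : weakLe cs w w := ⟨1, (mul_one w).symm, by simp⟩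

lemma length_le_of_le {u w : W} (h : weakLe cs u w) : ℓ u ≤ ℓ w := by
  obtain ⟨v, _, hl⟩ := h; omega

lemma eq_of_le_of_length_le {u w : W} (h : weakLe cs u w) (hl : ℓ w ≤ ℓ u) : u = w := by
  obtain ⟨v, hv, hlen⟩ := h
  have : ℓ v = 0 := by omega
  rw [cs.length_eq_zero_iff] at this
  rw [hv, this, mul_one]

lemma le_trans {a b c : W} (h1 : weakLe cs a b) (h2 : weakLe cs b c) : weakLe cs a c := by
  obtain ⟨v1, rfl, hl1⟩ := h1
  obtain ⟨v2, rfl, hl2⟩ := h2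
  refine ⟨v1 * v2, mul_assoc a v1 v2, ?_⟩
  have t1 : ℓ (a * v1 * v2) ≤ ℓ (a * v1) + ℓ v2 := cs.length_mul_le _ _
  have t2 : ℓ (v1 * v2) ≤ ℓ v1 + ℓ v2 := cs.length_mul_le _ _
  have t3 : ℓ (a * (v1 * v2)) ≤ ℓ a + ℓ (v1 * v2) := cs.length_mul_le _ _
  rw [← mul_assoc] at t3
  omega

lemma le_antisymm {a b : W} (h1 : weakLe cs a b) (h2 : weakLe cs b a) : a = b :=
  eq_of_le_of_length_le cs h1 (length_le_of_le cs h2)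

/-- the fundamental characterization: `u ≤ w` iff every left inversion of `u`
is a left inversion of `w`. -/
lemma le_iff_inversions {u w : W} :
    weakLe cs u w ↔ ∀ t, cs.IsLeftInversion u t → cs.IsLeftInversion w t := by
  constructor
  · rintro ⟨v, rfl, hlen⟩ t ⟨ht, hlt⟩
    refine ⟨ht, ?_⟩
    have hτr : cs.IsReflection (u⁻¹ * t * u) := by
      have := ht.conj u⁻¹
      rwa [inv_inv] at this
    by_cases hc : ℓ ((u⁻¹ * t * u) * v) < ℓ v
    · have he : t * (u * v) = u * ((u⁻¹ * t * u) * v) := by group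
      calc ℓ (t * (u * v)) = ℓ (u * ((u⁻¹ * t * u) * v)) := by rw [he]
      _ ≤ ℓ u + ℓ ((u⁻¹ * t * u) * v) := cs.length_mul_le _ _
      _ < ℓ u + ℓ v := by omega
      _ = ℓ (u * v) := hlen.symm
    · have h1 : nu cs u t = 1 := (nu_eq_one_iff cs ht).mpr hlt
      have h2 : nu cs v (u⁻¹ * t * u) = 0 := by
        rcases zmod2_cases (nu cs v (u⁻¹ * t * u)) with h | h
        · exact h
        · exact absurd ((nu_eq_one_iff cs hτr).mp h) hc
      have : nu cs (u * v) t = 1 := by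
        rw [nu_mul, h1, h2, add_zero]
      exact (nu_eq_one_iff cs ht).mp this
  · intro h
    -- induction on the length of u
    have main : ∀ n, ∀ u w : W, ℓ u ≤ n →
        (∀ t, cs.IsLeftInversion u t → cs.IsLeftInversion w t) → weakLe cs u w := by
      intro n
      induction n with
      | zero =>
        intro u w hu _
        rw [Nat.le_zero, cs.length_eq_zero_iff] at hu
        rw [hu]; exact one_le cs w
      | succ n ih =>
        intro u w hu hsub
        by_cases hu1 : u = 1
        · rw [hu1]; exact one_le cs w
        obtain ⟨i, hdesc⟩ := cs.exists_leftDescent_of_ne_one hu1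
        have hdesc' : ℓ (s i * u) < ℓ u := hdesc
        have hsw : ℓ (s i * w) < ℓ w :=
          (hsub (s i) ⟨cs.isReflection_simple i, hdesc'⟩).2
        have hsub' : ∀ t, cs.IsLeftInversion (s i * u) t → cs.IsLeftInversion (s i * w) t := by
          rintro t ⟨ht, hlt⟩
          have hti : t ≠ s i := by
            rintro rfl
            rw [← mul_assoc, cs.simple_mul_simple_self, one_mul] at hlt
            omega
          have hrefl : cs.IsReflection (s i * t * s i) := by
            have := ht.conj (s i); rwa [cs.inv_simple] at this
          have hnu1 : nu cs (s i * u) t = 1 := (nu_eq_one_iff cs ht).mpr hlt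
          have hs1 : nu cs (s i * u) t = nu cs u (s i * t * s i) := by
            rw [nu_mul, nu_simple, if_neg hti, zero_add, cs.inv_simple]
          have hinvu : cs.IsLeftInversion u (s i * t * s i) :=
            (nu_eq_one_iff' cs hrefl).mp (by rw [← hs1]; exact hnu1)
          have hinvw := hsub _ hinvu
          have hnuw : nu cs w (s i * t * s i) = 1 := (nu_eq_one_iff' cs hrefl).mpr hinvw
          have hs2 : nu cs (s i * w) t = nu cs w (s i * t * s i) := by
            rw [nu_mul, nu_simple, if_neg hti, zero_add, cs.inv_simple]
          refine ⟨ht, ?_⟩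
          exact (nu_eq_one_iff cs ht).mp (by rw [hs2]; exact hnuw)
        have hlu : ℓ (s i * u) ≤ n := by omega
        obtain ⟨v, hv, hl⟩ := ih (s i * u) (s i * w) hlu hsub'
        refine ⟨v, ?_, ?_⟩
        · calc w = (s i * s i) * w := by rw [cs.simple_mul_simple_self, one_mul]
          _ = s i * (s i * w) := by rw [mul_assoc]
          _ = s i * (s i * u * v) := by rw [hv]
          _ = (s i * s i) * (u * v) := by group
          _ = u * v := by rw [cs.simple_mul_simple_self, one_mul]
        · rcases cs.length_simple_mul u i with h' | h' <;>
            rcases cs.length_simple_mul w i with h'' | h'' <;> omega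
    exact main (ℓ u) u w le_rfl h


lemma conj_conj (i : B) (t : W) : s i * (s i * t * s i) * s i = t := by
  have ha := cs.simple_mul_simple_self i
  calc s i * (s i * t * s i) * s i = (s i * s i) * t * (s i * s i) := by group
  _ = t := by rw [ha, one_mul, mul_one]

lemma inv_smul_iff {w t : W} {i : B} (ht : cs.IsReflection t) (hti : t ≠ s i) :
    cs.IsLeftInversion (s i * w) t ↔ cs.IsLeftInversion w (s i * t * s i) := by
  have hrefl : cs.IsReflection (s i * t * s i) := by
    have := ht.conj (s i); rwa [cs.inv_simple] at this
  rw [← nu_eq_one_iff' cs ht, ← nu_eq_one_iff' cs hrefl, nu_mul, nu_simple, if_neg hti,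
    zero_add, cs.inv_simple]

lemma not_inv_simple_smul {u : W} {i : B} (hu : cs.IsLeftDescent u i) :
    ¬ cs.IsLeftInversion (s i * u) (s i) := by
  rintro ⟨-, hlt⟩
  rw [← mul_assoc, cs.simple_mul_simple_self, one_mul] at hlt
  have : ℓ (s i * u) < ℓ u := hu
  omega

lemma smul_le_smul {u w : W} {i : B} (hu : cs.IsLeftDescent u i) (hw : cs.IsLeftDescent w i) :
    weakLe cs u w ↔ weakLe cs (s i * u) (s i * w) := by
  rw [le_iff_inversions, le_iff_inversions]
  constructor
  · intro h t hinv
    have ht := hinv.1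
    have hti : t ≠ s i := by
      rintro rfl
      exact not_inv_simple_smul cs hu hinv
    rw [inv_smul_iff cs ht hti] at hinv
    have := h _ hinv
    rw [← inv_smul_iff cs ht hti] at this
    exact this
  · intro h t hinv
    have ht := hinv.1
    by_cases hti : t = s i
    · subst hti
      exact ⟨ht, hw⟩
    · -- t inversion of u = s i * (s i * u)
      have hrefl : cs.IsReflection (s i * t * s i) := by
        have := ht.conj (s i); rwa [cs.inv_simple] at this
      have e : s i * (s i * u) = u := by
        rw [← mul_assoc, cs.simple_mul_simple_self, one_mul]
      have hinv' : cs.IsLeftInversion (s i * u) (s i * t * s i) := by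
        rw [← inv_smul_iff cs ht hti, e]
        exact hinv
      have hinvw := h _ hinv'
      have hsts : s i * t * s i ≠ s i := by
        intro hh
        apply hti
        have := congrArg (fun z => s i * z * s i) hh
        simpa [conj_conj, ← mul_assoc, cs.simple_mul_simple_self] using
          (conj_conj cs i t ▸ this : s i * (s i * t * s i) * s i = s i * s i * s i)
      have := (inv_smul_iff cs hrefl hsts).mp hinvw
      rwa [conj_conj] at this

lemma not_descent_of_le_smul {g u : W} {i : B} (h : weakLe cs g (s i * u))
    (hu : cs.IsLeftDescent u i) : ¬ cs.IsLeftDescent g i := by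
  intro hd
  exact not_inv_simple_smul cs hu
    ((le_iff_inversions cs).mp h (s i) ⟨cs.isReflection_simple i, hd⟩)

lemma smul_le_of_le_smul {g u : W} {i : B} (h : weakLe cs g (s i * u))
    (hu : cs.IsLeftDescent u i) : weakLe cs (s i * g) u := by
  have hng := not_descent_of_le_smul cs h hu
  have hlen : ℓ (s i * g) = ℓ g + 1 := by
    have hd : ¬ ℓ (s i * g) < ℓ g := hng
    rcases cs.length_simple_mul g i with h' | h' <;> omega
  have hdsg : cs.IsLeftDescent (s i * g) i := by
    show ℓ (s i * (s i * g)) < ℓ (s i * g)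
    rw [← mul_assoc, cs.simple_mul_simple_self, one_mul]
    omega
  have e : s i * (s i * g) = g := by
    rw [← mul_assoc, cs.simple_mul_simple_self, one_mul]
  have := (smul_le_smul cs hdsg hu).mpr
  rw [e] at this
  exact this h

/-- the lifting lemma: if `x ≤ u`, `s i` is a descent of `u` but not of `x`,
then `x ≤ s i * u`. -/
lemma le_smul_of_not_descent {x u : W} {i : B} (hxu : weakLe cs x u)
    (hdu : cs.IsLeftDescent u i) (hnx : ¬ cs.IsLeftDescent x i) :
    weakLe cs x (s i * u) := by
  obtain ⟨v, rfl, hlen⟩ := hxu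
  have hsx : nu cs x (s i) = 0 := by
    rcases zmod2_cases (nu cs x (s i)) with h0 | h1
    · exact h0
    · exact absurd ((nu_eq_one_iff cs (cs.isReflection_simple i)).mp h1) hnx
  have h1 : nu cs (x * v) (s i) = 1 :=
    (nu_eq_one_iff cs (cs.isReflection_simple i)).mpr hdu
  rw [nu_mul, hsx, zero_add] at h1
  have hτ : cs.IsReflection (x⁻¹ * s i * x) := by
    have := (cs.isReflection_simple i).conj x⁻¹
    rwa [inv_inv] at this
  have hlt : ℓ ((x⁻¹ * s i * x) * v) < ℓ v := (nu_eq_one_iff cs hτ).mp h1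
  have he : s i * (x * v) = x * ((x⁻¹ * s i * x) * v) := by group
  refine ⟨(x⁻¹ * s i * x) * v, he, ?_⟩
  have hx1 : ℓ (s i * (x * v)) + 1 = ℓ (x * v) := by
    have hd : ℓ (s i * (x * v)) < ℓ (x * v) := hdu
    rcases cs.length_simple_mul (x * v) i with h' | h' <;> omega
  have tE : ℓ (x * ((x⁻¹ * s i * x) * v)) ≤ ℓ x + ℓ ((x⁻¹ * s i * x) * v) :=
    cs.length_mul_le _ _
  rw [← he] at tE
  omega


lemma descent_of_le {x u : W} {i : B} (hxu : weakLe cs x u) (hd : cs.IsLeftDescent x i) :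
    cs.IsLeftDescent u i :=
  (cs.isLeftInversion_simple_iff_isLeftDescent u i).mp
    ((le_iff_inversions cs).mp hxu (s i)
      ((cs.isLeftInversion_simple_iff_isLeftDescent x i).mpr hd))

variable [Finite W]

lemma meet_exists_aux : ∀ n, ∀ u v : W, ℓ u + ℓ v ≤ n →
    ∃ m, weakLe cs m u ∧ weakLe cs m v ∧
      ∀ x, weakLe cs x u → weakLe cs x v → weakLe cs x m := by
  intro n
  induction n with
  | zero =>
    intro u v h
    have hu : u = 1 := by rw [← cs.length_eq_zero_iff]; omega
    subst hu
    exact ⟨1, le_refl cs 1, one_le cs v, fun x hx _ => hx⟩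
  | succ n ih =>
    intro u v hn
    have hne : Nonempty {z : W // weakLe cs z u ∧ weakLe cs z v} :=
      ⟨⟨1, one_le cs u, one_le cs v⟩⟩
    obtain ⟨⟨m, hmu, hmv⟩, hmax'⟩ :=
      Finite.exists_max (fun z : {z : W // weakLe cs z u ∧ weakLe cs z v} => ℓ z.1)
    have hmax : ∀ z : W, weakLe cs z u → weakLe cs z v → ℓ z ≤ ℓ m :=
      fun z h1 h2 => hmax' ⟨z, h1, h2⟩
    refine ⟨m, hmu, hmv, ?_⟩
    have hB : ∀ i : B, cs.IsLeftDescent u i → cs.IsLeftDescent v i →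
        cs.IsLeftDescent m i := by
      intro i hdu hdv
      by_contra hnd
      have hm1 : weakLe cs m (s i * u) := le_smul_of_not_descent cs hmu hdu hnd
      have hm2 : weakLe cs m (s i * v) := le_smul_of_not_descent cs hmv hdv hnd
      have hdu' : ℓ (s i * u) < ℓ u := hdu
      have hdv' : ℓ (s i * v) < ℓ v := hdv
      obtain ⟨g, hg1, hg2, hg3⟩ := ih (s i * u) (s i * v) (by omega)
      have hmg : weakLe cs m g := hg3 m hm1 hm2
      have hsg_u : weakLe cs (s i * g) u := smul_le_of_le_smul cs hg1 hdu
      have hsg_v : weakLe cs (s i * g) v := smul_le_of_le_smul cs hg2 hdv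
      have hng : ¬ ℓ (s i * g) < ℓ g := not_descent_of_le_smul cs hg1 hdu
      have hlen_g : ℓ (s i * g) = ℓ g + 1 := by
        rcases cs.length_simple_mul g i with h' | h' <;> omega
      have h1 := hmax _ hsg_u hsg_v
      have h2 : ℓ m ≤ ℓ g := length_le_of_le cs hmg
      omega
    have hA : ∀ i : B, cs.IsLeftDescent m i →
        ∀ x, weakLe cs x (s i * u) → weakLe cs x (s i * v) → weakLe cs x (s i * m) := by
      intro i hdm
      have hdu : cs.IsLeftDescent u i := descent_of_le cs hmu hdm
      have hdv : cs.IsLeftDescent v i := descent_of_le cs hmv hdm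
      have hdu' : ℓ (s i * u) < ℓ u := hdu
      have hdv' : ℓ (s i * v) < ℓ v := hdv
      obtain ⟨g, hg1, hg2, hg3⟩ := ih (s i * u) (s i * v) (by omega)
      have h1 : weakLe cs (s i * m) (s i * u) := (smul_le_smul cs hdm hdu).mp hmu
      have h2 : weakLe cs (s i * m) (s i * v) := (smul_le_smul cs hdm hdv).mp hmv
      have hsm_g : weakLe cs (s i * m) g := hg3 _ h1 h2
      have hsg_u : weakLe cs (s i * g) u := smul_le_of_le_smul cs hg1 hdu
      have hsg_v : weakLe cs (s i * g) v := smul_le_of_le_smul cs hg2 hdv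
      have hmax1 := hmax _ hsg_u hsg_v
      have hng : ¬ ℓ (s i * g) < ℓ g := not_descent_of_le_smul cs hg1 hdu
      have hlen_g : ℓ (s i * g) = ℓ g + 1 := by
        rcases cs.length_simple_mul g i with h' | h' <;> omega
      have hdm' : ℓ (s i * m) < ℓ m := hdm
      have hlen_m : ℓ (s i * m) + 1 = ℓ m := by
        rcases cs.length_simple_mul m i with h' | h' <;> omega
      have hglen : ℓ g ≤ ℓ (s i * m) := by omega
      have hgm : s i * m = g := eq_of_le_of_length_le cs hsm_g hglen
      intro x hx1 hx2
      rw [hgm]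
      exact hg3 x hx1 hx2
    intro x hxu hxv
    by_cases hx1 : x = 1
    · rw [hx1]; exact one_le cs m
    obtain ⟨i, hdx⟩ := cs.exists_leftDescent_of_ne_one hx1
    have hdu : cs.IsLeftDescent u i := descent_of_le cs hxu hdx
    have hdv : cs.IsLeftDescent v i := descent_of_le cs hxv hdx
    have hdm := hB i hdu hdv
    have h1 : weakLe cs (s i * x) (s i * u) := (smul_le_smul cs hdx hdu).mp hxu
    have h2 : weakLe cs (s i * x) (s i * v) := (smul_le_smul cs hdx hdv).mp hxv
    have h3 : weakLe cs (s i * x) (s i * m) := hA i hdm _ h1 h2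
    exact (smul_le_smul cs hdx hdm).mpr h3

lemma meet_exists (u v : W) :
    ∃ m, weakLe cs m u ∧ weakLe cs m v ∧
      ∀ x, weakLe cs x u → weakLe cs x v → weakLe cs x m :=
  meet_exists_aux cs (ℓ u + ℓ v) u v le_rfl

lemma exists_top : ∃ w₀ : W, ∀ w, weakLe cs w w₀ := by
  obtain ⟨w₀, hmax⟩ := Finite.exists_max (fun w : W => ℓ w)
  refine ⟨w₀, fun w => (le_iff_inversions cs).mpr ?_⟩
  rintro t ⟨ht, -⟩
  refine ⟨ht, ?_⟩
  have h1 : ℓ (t * w₀) ≤ ℓ w₀ := hmax _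
  have h2 : ℓ (t * w₀) ≠ ℓ w₀ := ht.length_mul_right_ne w₀
  omega

lemma join_exists (u v : W) :
    ∃ j, weakLe cs u j ∧ weakLe cs v j ∧
      ∀ z, weakLe cs u z → weakLe cs v z → weakLe cs j z := by
  classical
  obtain ⟨w₀, htop⟩ := exists_top cs
  choose glb hg1 hg2 hg3 using meet_exists cs
  haveI : Fintype W := Fintype.ofFinite W
  set step : W → W → W :=
    fun z acc => if weakLe cs u z ∧ weakLe cs v z then glb z acc else acc with hstep
  have main : ∀ l : List W,
      (weakLe cs u (l.foldr step w₀) ∧ weakLe cs v (l.foldr step w₀)) ∧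
        ∀ z ∈ l, weakLe cs u z → weakLe cs v z → weakLe cs (l.foldr step w₀) z := by
    intro l
    induction l with
    | nil => exact ⟨⟨htop u, htop v⟩, by simp⟩
    | cons a l ihl =>
      obtain ⟨⟨ihu, ihv⟩, ihz⟩ := ihl
      have hcons : (a :: l).foldr step w₀
          = if weakLe cs u a ∧ weakLe cs v a then glb a (l.foldr step w₀)
            else l.foldr step w₀ := rfl
      rw [hcons]
      by_cases hc : weakLe cs u a ∧ weakLe cs v a
      · rw [if_pos hc]
        refine ⟨⟨hg3 a (l.foldr step w₀) u hc.1 ihu, hg3 a (l.foldr step w₀) v hc.2 ihv⟩, ?_⟩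
        intro z hz h1 h2
        rcases List.mem_cons.mp hz with rfl | hz'
        · exact hg1 z (l.foldr step w₀)
        · exact le_trans cs (hg2 a (l.foldr step w₀)) (ihz z hz' h1 h2)
      · rw [if_neg hc]
        refine ⟨⟨ihu, ihv⟩, ?_⟩
        intro z hz h1 h2
        rcases List.mem_cons.mp hz with rfl | hz'
        · exact absurd ⟨h1, h2⟩ hc
        · exact ihz z hz' h1 h2
  obtain ⟨⟨hju, hjv⟩, hjz⟩ := main (Finset.univ : Finset W).toList
  refine ⟨_, hju, hjv, ?_⟩
  intro z h1 h2
  exact hjz z (Finset.mem_toList.mpr (Finset.mem_univ z)) h1 h2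

end WeakOrderAux

end Aux


/-- The right weak order on a finite Coxeter group is a lattice, with a unique maximal
element `w₀` satisfying `ℓ(w) + ℓ(w⁻¹w₀) = ℓ(w₀)` for all `w`. -/
theorem weak_order_lattice [Finite W] (cs : CoxeterSystem M W) :
    (∀ u v : W,
      (∃ m, weakLe cs m u ∧ weakLe cs m v ∧
        ∀ x, weakLe cs x u → weakLe cs x v → weakLe cs x m) ∧
      (∃ j, weakLe cs u j ∧ weakLe cs v j ∧
        ∀ x, weakLe cs u x → weakLe cs v x → weakLe cs j x)) ∧
    ∃! w₀ : W, (∀ w, weakLe cs w w₀) ∧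
      ∀ w, cs.length w + cs.length (w⁻¹ * w₀) = cs.length w₀ := by
  constructor
  · intro u v
    exact ⟨WeakOrderAux.meet_exists cs u v, WeakOrderAux.join_exists cs u v⟩
  · obtain ⟨w₀, htop⟩ := WeakOrderAux.exists_top cs
    refine ⟨w₀, ⟨htop, ?_⟩, ?_⟩
    · intro w
      obtain ⟨v, hv, hl⟩ := htop w
      have he : w⁻¹ * w₀ = v := by rw [hv]; group
      rw [he]
      omega
    · rintro y ⟨hy1, -⟩
      exact WeakOrderAux.le_antisymm cs (htop y) (hy1 w₀)
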